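/- For objects Z, W of Z(G,α) and commuting elements f, g of G, the character of the tensor product satisfies χ_{Z⊗W}(f,g) = Σ over factorizations f₁f₂ = f with f_i commuting with g, of α(g|f₁,f₂) · χ_Z(f₁,g) · χ_W(f₂,g). -/
import Mathlib


open scoped BigOperators TensorProduct

/-- `α(f,g|h) = α(f,g,h)⁻¹ · α(f, ghg⁻¹, g) · α((fg)h(fg)⁻¹, f, g)⁻¹`. -/
def aux2 {G : Type} [Group G] {k : Type} [Field k]
    (α : G → G → G → kˣ) (f g h : G) : kˣ :=
  (α f g h)⁻¹ * α f (g * h * g⁻¹) g * (α ((f * g) * h * (f * g)⁻¹) f g)⁻¹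

/-- `α(f|g,h) = α(f,g,h) · α(fgf⁻¹, f, h)⁻¹ · α(fgf⁻¹, fhf⁻¹, f)`. -/
def aux1 {G : Type} [Group G] {k : Type} [Field k]
    (α : G → G → G → kˣ) (f g h : G) : kˣ :=
  α f g h * (α (f * g * f⁻¹) f h)⁻¹ * α (f * g * f⁻¹) (f * h * f⁻¹) f

/-- An object of `Z(G,α)`: a finite-dimensional `G`-graded vector space with an
`α`-projective `G`-action compatible with the grading. -/
structure ZObj (k : Type) [Field k] (G : Type) [Group G] [Fintype G]
    (α : G → G → G → kˣ) where
  V : Type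
  [ac : AddCommGroup V]
  [mo : Module k V]
  [fin : Module.Finite k V]
  p : G → V →ₗ[k] V
  p_idem : ∀ g, p g ∘ₗ p g = p g
  p_orth : ∀ g h, g ≠ h → p g ∘ₗ p h = 0
  p_total : ∑ g : G, p g = LinearMap.id
  ρ : G → V →ₗ[k] V
  ρ_one : ρ 1 = LinearMap.id
  ρ_bij : ∀ g, Function.Bijective (ρ g)
  grade : ∀ g h, ρ g ∘ₗ p h = p (g * h * g⁻¹) ∘ₗ ρ g
  proj : ∀ g h x, ρ (g * h) ∘ₗ p x
    = ((aux2 α g h x : kˣ) : k) • ((ρ g ∘ₗ ρ h) ∘ₗ p x)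

attribute [instance] ZObj.ac ZObj.mo ZObj.fin

variable {k : Type} [Field k] {G : Type} [Group G] [Fintype G] [DecidableEq G]
  {α : G → G → G → kˣ}

/-- The character `χ_Z(f,g) = Tr_{Z_f}(g)`. -/
noncomputable def chi (Z : ZObj k G α) (f g : G) : k :=
  LinearMap.trace k Z.V (Z.p f ∘ₗ Z.ρ g)

/-- The degree-`f` projection of the tensor product `Z ⊗ W` in `Z(G,α)`:
`(Z⊗W)_f = ⊕_{f₁f₂ = f} Z_{f₁} ⊗ W_{f₂}`. -/
noncomputable def tenP (Z W : ZObj k G α) (f : G) :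
    Z.V ⊗[k] W.V →ₗ[k] Z.V ⊗[k] W.V :=
  ∑ q : G × G, if q.1 * q.2 = f then TensorProduct.map (Z.p q.1) (W.p q.2) else 0

/-- The action of `g` on the tensor product `Z ⊗ W` in `Z(G,α)`:
`g.(x⊗y) = α(g|f₁,f₂)(g.x ⊗ g.y)` for `x ∈ Z_{f₁}`, `y ∈ W_{f₂}`. -/
noncomputable def tenRho (Z W : ZObj k G α) (g : G) :
    Z.V ⊗[k] W.V →ₗ[k] Z.V ⊗[k] W.V :=
  ∑ q : G × G, ((aux1 α g q.1 q.2 : kˣ) : k) •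
    TensorProduct.map (Z.ρ g ∘ₗ Z.p q.1) (W.ρ g ∘ₗ W.p q.2)

/-- `p a ∘ (ρ g ∘ p b)` collapses to `ρ g ∘ p b` when `a = g b g⁻¹`, else `0`. -/
lemma ZObj.collapse (Z : ZObj k G α) (g a b : G) :
    Z.p a ∘ₗ (Z.ρ g ∘ₗ Z.p b) = if a = g * b * g⁻¹ then Z.ρ g ∘ₗ Z.p b else 0 := by
  rw [Z.grade g b, ← LinearMap.comp_assoc]
  split_ifs with h
  · rw [h, Z.p_idem, ← Z.grade]
  · rw [Z.p_orth _ _ h, LinearMap.zero_comp]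

lemma chi_eq' (Z : ZObj k G α) (f g : G) :
    LinearMap.trace k Z.V (Z.ρ g ∘ₗ Z.p f) = chi Z f g :=
  LinearMap.trace_comp_comm' _ _

lemma chi_eq_zero (Z : ZObj k G α) (h g : G) (hc : ¬ Commute h g) :
    chi Z h g = 0 := by
  have hne : g⁻¹ * h * g ≠ h := by
    intro he
    apply hc
    calc h * g = g * (g⁻¹ * h * g) := by group
    _ = g * h := by rw [he]
  have h2 := Z.grade g (g⁻¹ * h * g)
  have h3 : g * (g⁻¹ * h * g) * g⁻¹ = h := by group
  rw [h3] at h2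
  have h1 : Z.p h ∘ₗ Z.ρ g = (Z.p h ∘ₗ Z.ρ g) ∘ₗ Z.p (g⁻¹ * h * g) := by
    calc Z.p h ∘ₗ Z.ρ g = Z.p h ∘ₗ (Z.p h ∘ₗ Z.ρ g) := by
          rw [← LinearMap.comp_assoc, Z.p_idem]
    _ = Z.p h ∘ₗ (Z.ρ g ∘ₗ Z.p (g⁻¹ * h * g)) := by rw [h2]
    _ = (Z.p h ∘ₗ Z.ρ g) ∘ₗ Z.p (g⁻¹ * h * g) := by rw [LinearMap.comp_assoc]
  rw [chi, h1, LinearMap.trace_comp_comm', ← LinearMap.comp_assoc,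
    Z.p_orth _ _ hne, LinearMap.zero_comp, map_zero]

lemma mul_collapse (Z W : ZObj k G α) (g a b r1 r2 : G) :
    TensorProduct.map (Z.p a) (W.p b) ∘ₗ
      TensorProduct.map (Z.ρ g ∘ₗ Z.p r1) (W.ρ g ∘ₗ W.p r2)
    = if a = g * r1 * g⁻¹ ∧ b = g * r2 * g⁻¹ then
        TensorProduct.map (Z.ρ g ∘ₗ Z.p r1) (W.ρ g ∘ₗ W.p r2) else 0 := by
  rw [← TensorProduct.map_comp, Z.collapse, W.collapse]
  by_cases h1 : a = g * r1 * g⁻¹ <;> by_cases h2 : b = g * r2 * g⁻¹ <;>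
    simp [h1, h2]

lemma term_eval (Z W : ZObj k G α) (g r1 r2 : G) (c : k) (q : G × G) (f : G) :
    (if q.1 * q.2 = f then TensorProduct.map (Z.p q.1) (W.p q.2) else 0) ∘ₗ
      (c • TensorProduct.map (Z.ρ g ∘ₗ Z.p r1) (W.ρ g ∘ₗ W.p r2))
    = if q.1 * q.2 = f ∧ q.1 = g * r1 * g⁻¹ ∧ q.2 = g * r2 * g⁻¹ then
        c • TensorProduct.map (Z.ρ g ∘ₗ Z.p r1) (W.ρ g ∘ₗ W.p r2) else 0 := by
  by_cases h : q.1 * q.2 = f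
  · rw [if_pos h, LinearMap.comp_smul, mul_collapse]
    by_cases h2 : q.1 = g * r1 * g⁻¹ ∧ q.2 = g * r2 * g⁻¹
    · rw [if_pos h2, if_pos ⟨h, h2.1, h2.2⟩]
    · rw [if_neg h2, if_neg (by tauto), smul_zero]
  · rw [if_neg h, LinearMap.zero_comp, if_neg (by tauto)]

open scoped Classical in
/-- for objects `Z, W` of `Z(G,α)` and commuting `f,g ∈ G`, the
character of the tensor product satisfies
`χ_{Z⊗W}(f,g) = Σ_{f₁f₂=f, f_i g=g f_i} α(g|f₁,f₂) χ_Z(f₁,g) χ_W(f₂,g)`. -/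
theorem stmt14
    (hcoc : ∀ f g h l : G,
      α g h l * α f (g * h) l * α f g h = α (f * g) h l * α f g (h * l))
    (hnorm : ∀ f g h : G, f = 1 ∨ g = 1 ∨ h = 1 → α f g h = 1)
    (Z W : ZObj k G α) (f g : G) (hfg : Commute f g) :
    LinearMap.trace k (Z.V ⊗[k] W.V) (tenP Z W f ∘ₗ tenRho Z W g)
      = ∑ q : G × G,
          if q.1 * q.2 = f ∧ Commute q.1 g ∧ Commute q.2 g then
            ((aux1 α g q.1 q.2 : kˣ) : k) * chi Z q.1 g * chi W q.2 g
          else 0 := by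
  classical
  set N : G × G → (Z.V ⊗[k] W.V →ₗ[k] Z.V ⊗[k] W.V) := fun r =>
    TensorProduct.map (Z.ρ g ∘ₗ Z.p r.1) (W.ρ g ∘ₗ W.p r.2) with hN
  have key : tenP Z W f ∘ₗ tenRho Z W g
      = ∑ r : G × G, if g * (r.1 * r.2) * g⁻¹ = f then
          ((aux1 α g r.1 r.2 : kˣ) : k) • N r
        else 0 := by
    rw [tenP, tenRho, ← Module.End.mul_eq_comp, Finset.sum_mul]
    simp only [Finset.mul_sum]
    refine Finset.sum_comm.trans (Finset.sum_congr rfl fun r _ => ?_)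
    simp only [Module.End.mul_eq_comp]
    simp only [term_eval Z W g r.1 r.2 _ _ f]
    rw [Finset.sum_eq_single (g * r.1 * g⁻¹, g * r.2 * g⁻¹)]
    · have he : g * r.1 * g⁻¹ * (g * r.2 * g⁻¹) = g * (r.1 * r.2) * g⁻¹ := by group
      simp only [he]
      by_cases hf : g * (r.1 * r.2) * g⁻¹ = f
      · rw [if_pos ⟨hf, trivial, trivial⟩, if_pos hf]
      · rw [if_neg (by tauto), if_neg hf]
    · intro q _ hq
      have : ¬ (q.1 * q.2 = f ∧ q.1 = g * r.1 * g⁻¹ ∧ q.2 = g * r.2 * g⁻¹) := by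
        intro ⟨_, h1, h2⟩
        exact hq (Prod.ext h1 h2)
      rw [if_neg this]
    · intro h
      exact absurd (Finset.mem_univ _) h
  rw [key, map_sum]
  refine Finset.sum_congr rfl fun r _ => ?_
  have htr : LinearMap.trace k (Z.V ⊗[k] W.V) (N r) = chi Z r.1 g * chi W r.2 g := by
    rw [hN, LinearMap.trace_tensorProduct', chi_eq', chi_eq']
  rw [apply_ite (LinearMap.trace k (Z.V ⊗[k] W.V)), map_zero, map_smul,
    smul_eq_mul, htr]
  by_cases h1 : Commute r.1 g
  · by_cases h2 : Commute r.2 g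
    · have e : g * (r.1 * r.2) * g⁻¹ = r.1 * r.2 := by
        rw [← (h1.mul_left h2).eq]; group
      rw [e]
      by_cases hf : r.1 * r.2 = f
      · rw [if_pos hf, if_pos ⟨hf, h1, h2⟩, mul_assoc]
      · rw [if_neg hf, if_neg (by tauto)]
    · simp [chi_eq_zero W r.2 g h2, h2]
  · simp [chi_eq_zero Z r.1 g h1, h1]
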